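/- Let f : ℝⁿ → ℂ be bounded and slowly oscillating at infinity in the following sense: for every β ∈ ℤⁿ, lim_{ℤⁿ∋α→∞} sup_{y∈[0,1]ⁿ} |f(y + α + β) − f(y + α)| = 0. Suppose h : ℕ → ℤⁿ is a sequence tending to infinity and g : ℝⁿ → ℂ is a function such that f(x + h(m)) → g(x) as m → ∞ for every x ∈ ℝⁿ. Then g is ℤⁿ-periodic, i.e., g(x + β) = g(x) for all x ∈ ℝⁿ and all β ∈ ℤⁿ. -/
import Mathlib


open Filter

/-- The canonical embedding `ℤⁿ → ℝⁿ`. -/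
def intToReal (n : ℕ) (α : Fin n → ℤ) : Fin n → ℝ := fun i => (α i : ℝ)

/-- A bounded function `f : ℝⁿ → ℂ` is slowly oscillating at infinity: for every
`β ∈ ℤⁿ`, `sup_{y ∈ [0,1]ⁿ} |f(y + α + β) - f(y + α)| → 0` as `ℤⁿ ∋ α → ∞`. -/
def SlowlyOscillating (n : ℕ) (f : (Fin n → ℝ) → ℂ) : Prop :=
  ∀ β : Fin n → ℤ, ∀ ε : ℝ, 0 < ε → ∃ R : ℝ, ∀ α : Fin n → ℤ, R < ‖α‖ →
    ∀ y : Fin n → ℝ, (∀ i, y i ∈ Set.Icc (0 : ℝ) 1) →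
      ‖f (y + intToReal n α + intToReal n β) - f (y + intToReal n α)‖ ≤ ε

/-- Let `f : ℝⁿ → ℂ` be bounded and slowly oscillating at infinity.
If `h : ℕ → ℤⁿ` tends to infinity and `f(· + h(m))` converges pointwise to `g`, then `g`
is `ℤⁿ`-periodic. -/
theorem slowly_oscillating_limit_periodic (n : ℕ) (f : (Fin n → ℝ) → ℂ)
    (hbd : ∃ M : ℝ, ∀ x, ‖f x‖ ≤ M) (hso : SlowlyOscillating n f)
    (h : ℕ → Fin n → ℤ) (hinf : ∀ R : ℝ, ∃ m₀ : ℕ, ∀ m ≥ m₀, R < ‖h m‖)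
    (g : (Fin n → ℝ) → ℂ)
    (hconv : ∀ x : Fin n → ℝ,
      Tendsto (fun m => f (x + intToReal n (h m))) atTop (nhds (g x))) :
    ∀ (x : Fin n → ℝ) (β : Fin n → ℤ), g (x + intToReal n β) = g x := by
  intro x β
  set γ : Fin n → ℤ := fun i => ⌊x i⌋ with hγ
  set y : Fin n → ℝ := x - intToReal n γ with hy
  have hyIcc : ∀ i, y i ∈ Set.Icc (0 : ℝ) 1 := by
    intro i
    have h1 : y i = Int.fract (x i) := by
      simp only [hy, Pi.sub_apply, intToReal, hγ, Int.fract]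
    rw [h1]
    exact ⟨Int.fract_nonneg _, le_of_lt (Int.fract_lt_one _)⟩
  have harg : ∀ m, x + intToReal n β + intToReal n (h m)
      = y + intToReal n (γ + h m) + intToReal n β := by
    intro m
    funext i
    simp [hy, intToReal]
    ring
  have harg2 : ∀ m, x + intToReal n (h m) = y + intToReal n (γ + h m) := by
    intro m
    funext i
    simp [hy, intToReal]
    ring
  -- the difference tends to 0
  have key : Tendsto (fun m => f (x + intToReal n β + intToReal n (h m))
      - f (x + intToReal n (h m))) atTop (nhds 0) := by
    rw [Metric.tendsto_atTop]
    intro ε hε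
    obtain ⟨R, hR⟩ := hso β (ε / 2) (by linarith)
    obtain ⟨m₀, hm₀⟩ := hinf (R + ‖γ‖)
    refine ⟨m₀, fun m hm => ?_⟩
    have hnorm : R < ‖γ + h m‖ := by
      have h1 : ‖h m‖ ≤ ‖γ + h m‖ + ‖γ‖ := by
        calc ‖h m‖ = ‖(γ + h m) - γ‖ := by ring_nf
          _ ≤ ‖γ + h m‖ + ‖γ‖ := norm_sub_le _ _
      have := hm₀ m hm
      linarith
    have := hR (γ + h m) hnorm y hyIcc
    rw [dist_eq_norm, sub_zero, harg m, harg2 m]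
    linarith
  have hsub : Tendsto (fun m => f (x + intToReal n β + intToReal n (h m))
      - f (x + intToReal n (h m))) atTop (nhds (g (x + intToReal n β) - g x)) :=
    (hconv (x + intToReal n β)).sub (hconv x)
  have := tendsto_nhds_unique hsub key
  exact sub_eq_zero.mp this
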